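/- (Proposition 2) Let S ⊆ Fin n × Fin b be a stopping set of H_B, and suppose there is no stopping set T of H_E with T ∩ I_t = {(j, u_e) : (j,e) ∈ S} (i.e., S ∈ 𝕊_B \ 𝕊_E). Then there exists a vector h_S in the ZMod 2-row space of H_B whose support intersects S in exactly one element; consequently, S is not a stopping set of the augmented matrix obtained by adjoining the redundant parity-check h_S as an extra row to H_B. -/
import Mathlib


open Matrix

/-- For a matrix `H` over `ZMod 2`, a stopping set is a set `S` of column indices such
that no row of `H` has exactly one nonzero entry in the columns belonging to `S`. -/
def IsStoppingSet {ρ J : Type*} (H : Matrix ρ J (ZMod 2)) (S : Set J) : Prop :=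
  ∀ r : ρ, ¬ ∃! j : J, j ∈ S ∧ H r j ≠ 0

/-- **Proposition 2.** If `S` is a stopping set of `H_B` and there is no
stopping set `T` of `H_E` with `T ∩ I_t = {(j, u_e) : (j, e) ∈ S}` (i.e. `S ∈ 𝕊_B \ 𝕊_E`),
then the `ZMod 2`-row space of `H_B` contains a vector `h_S` whose support meets `S` in
exactly one element; consequently `S` is not a stopping set of the matrix obtained by
adjoining the redundant parity check `h_S` to `H_B` as an extra row. -/
theorem rpc_removes_stopping_set (b m n : ℕ) (hb : 1 ≤ b)
    (ΦB : GaloisField 2 b ≃ₗ[ZMod 2] (Fin b → ZMod 2))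
    (Ψm : GaloisField 2 b → Matrix (Fin b) (Fin b) (ZMod 2))
    (hΨm : ∀ (h x : GaloisField 2 b), Ψm h *ᵥ ΦB x = ΦB (h * x))
    (Hq : Matrix (Fin m) (Fin n) (GaloisField 2 b))
    (HB : Matrix (Fin m × Fin b) (Fin n × Fin b) (ZMod 2))
    (hHB : ∀ (i : Fin m) (e : Fin b) (j : Fin n) (f : Fin b),
      HB (i, e) (j, f) = Ψm (Hq i j) e f)
    (HE : Matrix
      ((Fin m × {v : Fin b → ZMod 2 // v ≠ 0}) ⊕
        (Fin n × {v : Fin b → ZMod 2 // v ≠ 0} × {v : Fin b → ZMod 2 // v ≠ 0}))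
      (Fin n × {v : Fin b → ZMod 2 // v ≠ 0}) (ZMod 2))
    (hHPM : ∀ (i : Fin m) (c : {v : Fin b → ZMod 2 // v ≠ 0}) (j : Fin n)
        (c' : {v : Fin b → ZMod 2 // v ≠ 0}),
      HE (Sum.inl (i, c)) (j, c') = 1 ↔
        (Hq i j ≠ 0 ∧
          (c' : Fin b → ZMod 2) = (Ψm (Hq i j))ᵀ *ᵥ (c : Fin b → ZMod 2)))
    (hHS : ∀ (j₀ : Fin n) (c₁ c₂ : {v : Fin b → ZMod 2 // v ≠ 0}) (j : Fin n)
        (c' : {v : Fin b → ZMod 2 // v ≠ 0}),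
      HE (Sum.inr (j₀, c₁, c₂)) (j, c') = 1 ↔
        (j = j₀ ∧ c₁ ≠ c₂ ∧ (c₁ : Fin b → ZMod 2) + (c₂ : Fin b → ZMod 2) ≠ 0 ∧
          (c' = c₁ ∨ c' = c₂ ∨
            (c' : Fin b → ZMod 2) = (c₁ : Fin b → ZMod 2) + (c₂ : Fin b → ZMod 2))))
    (u : Fin b → {v : Fin b → ZMod 2 // v ≠ 0})
    (hu : ∀ e : Fin b, (u e : Fin b → ZMod 2) = Pi.single e 1)
    (It : Set (Fin n × {v : Fin b → ZMod 2 // v ≠ 0}))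
    (hIt : It = {p | ∃ e : Fin b, p.2 = u e})
    (S : Set (Fin n × Fin b)) (hS : IsStoppingSet HB S)
    (hSE : ¬ ∃ T, IsStoppingSet HE T ∧
      T ∩ It = (fun q : Fin n × Fin b => (q.1, u q.2)) '' S) :
    ∃ hS' ∈ Submodule.span (ZMod 2)
        (Set.range (fun r => HB r : (Fin m × Fin b) → (Fin n × Fin b) → ZMod 2)),
      (∃ p ∈ S, {q : Fin n × Fin b | hS' q ≠ 0} ∩ S = {p}) ∧
      ¬ IsStoppingSet
          (Matrix.of (Sum.elim (fun r => HB r) (fun _ : Unit => hS'))) S := by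
  classical
  have z2 : ∀ x : ZMod 2, x ≠ 0 ↔ x = 1 := by decide
  have hxx : ∀ x : ZMod 2, x + x = 0 := by decide
  have hxy0 : ∀ x y : ZMod 2, x + y = x → y = 0 := by decide
  have hyx0 : ∀ x y : ZMod 2, x + y = y → x = 0 := by decide
  have hrep1 : ∀ x y : ZMod 2, x = y + (x + y) := by decide
  have hrep2 : ∀ x y : ZMod 2, y = x + (x + y) := by decide
  set Rsp := Submodule.span (ZMod 2)
      (Set.range (fun r => HB r : (Fin m × Fin b) → (Fin n × Fin b) → ZMod 2)) with hRsp
  -- Ψm 0 = 0 entrywise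
  have hΨ0 : ∀ e f : Fin b, Ψm 0 e f = 0 := by
    intro e f
    have h1 := hΨm 0 (ΦB.symm (Pi.single f 1))
    rw [LinearEquiv.apply_symm_apply, zero_mul, map_zero] at h1
    have := congrFun h1 e
    simpa [Matrix.mulVec_single] using this
  -- transpose action invertibility
  have hΨinv : ∀ hq : GaloisField 2 b, hq ≠ 0 → ∀ c : Fin b → ZMod 2, c ≠ 0 →
      (Ψm hq)ᵀ *ᵥ c ≠ 0 := by
    intro hq hq0 c hc h0
    apply hc
    have hdot : ∀ v : Fin b → ZMod 2, c ⬝ᵥ v = 0 := by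
      intro v
      have hx : hq * (hq⁻¹ * ΦB.symm v) = ΦB.symm v := by
        field_simp
      have h1 := hΨm hq (hq⁻¹ * ΦB.symm v)
      rw [hx, LinearEquiv.apply_symm_apply] at h1
      calc c ⬝ᵥ v = c ⬝ᵥ (Ψm hq *ᵥ ΦB (hq⁻¹ * ΦB.symm v)) := by rw [h1]
        _ = (c ᵥ* Ψm hq) ⬝ᵥ ΦB (hq⁻¹ * ΦB.symm v) := Matrix.dotProduct_mulVec _ _ _
        _ = 0 := by rw [← Matrix.mulVec_transpose, h0, zero_dotProduct]
    funext f
    have := hdot (Pi.single f 1)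
    simpa using this
  -- main claim
  have key : ∃ h ∈ Rsp, ∃ p ∈ S, {q : Fin n × Fin b | h q ≠ 0} ∩ S = {p} := by
    by_contra hc
    push_neg at hc
    apply hSE
    set InB : Fin n → (Fin b → ZMod 2) → Prop := fun j v =>
      ∃ g : (Fin n × Fin b) → ZMod 2, g ∈ Rsp ∧ (∀ q ∈ S, g q ≠ 0 → q.1 = j) ∧
        ∀ f : Fin b, (j, f) ∈ S → g (j, f) = v f with hInB
    have InB_zero : ∀ (j : Fin n) (v : Fin b → ZMod 2),
        (∀ f, (j, f) ∈ S → v f = 0) → InB j v := by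
      intro j v hv
      exact ⟨0, Submodule.zero_mem _, fun q _ hq => absurd rfl hq,
        fun f hf => by simp [hv f hf]⟩
    have InB_add : ∀ (j : Fin n) (v w : Fin b → ZMod 2),
        InB j v → InB j w → InB j (v + w) := by
      rintro j v w ⟨g1, hg1R, hg1S, hg1v⟩ ⟨g2, hg2R, hg2S, hg2v⟩
      refine ⟨g1 + g2, Submodule.add_mem _ hg1R hg2R, ?_, ?_⟩
      · intro q hq hne
        by_cases h1 : g1 q ≠ 0
        · exact hg1S q hq h1
        · push_neg at h1
          exact hg2S q hq (by simpa [Pi.add_apply, h1] using hne)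
      · intro f hf
        simp [Pi.add_apply, hg1v f hf, hg2v f hf]
    have InB_single : ∀ (j : Fin n) (v : Fin b → ZMod 2) (f₀ : Fin b),
        (j, f₀) ∈ S → v f₀ ≠ 0 → (∀ f, (j, f) ∈ S → f ≠ f₀ → v f = 0) → ¬ InB j v := by
      rintro j v f₀ hf₀ hv1 hv0 ⟨g, hgR, hgS, hgv⟩
      apply hc g hgR (j, f₀) hf₀
      ext ⟨j', f⟩
      constructor
      · rintro ⟨hne, hmem⟩
        have hj : j' = j := hgS (j', f) hmem hne
        subst hj
        have : f = f₀ := by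
          by_contra hff
          exact hne (by rw [hgv f hmem]; exact hv0 f hmem hff)
        simp [this]
      · intro hmm
        rw [Set.mem_singleton_iff] at hmm
        rw [hmm]
        exact ⟨by rw [Set.mem_setOf_eq, hgv f₀ hf₀]; exact hv1, hf₀⟩
    refine ⟨{p | ¬ InB p.1 (p.2 : Fin b → ZMod 2)}, ?_, ?_⟩
    · -- T is a stopping set of HE
      rintro (⟨i, c⟩ | ⟨j₀, c₁, c₂⟩) ⟨⟨j, c'⟩, ⟨hT, hne⟩, huniq⟩
      · -- parity-check rows
        obtain ⟨hij, hc'⟩ := (hHPM i c j c').1 ((z2 _).1 hne)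
        set rc : (Fin n × Fin b) → ZMod 2 :=
          fun q => ((Ψm (Hq i q.1))ᵀ *ᵥ (c : Fin b → ZMod 2)) q.2 with hrc
        have hrcR : rc ∈ Rsp := by
          have hre : rc = ∑ e : Fin b, (c : Fin b → ZMod 2) e • (fun q => HB (i, e) q) := by
            funext q
            obtain ⟨j', f⟩ := q
            rw [Finset.sum_apply]
            simp only [hrc, Matrix.mulVec, dotProduct, Matrix.transpose_apply,
              Pi.smul_apply, smul_eq_mul, hHB]
            exact Finset.sum_congr rfl fun e _ => mul_comm _ _
          rw [hre]
          exact Submodule.sum_mem _ fun e _ =>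
            Submodule.smul_mem _ _ (Submodule.subset_span ⟨(i, e), rfl⟩)
        have hgex : ∀ j' : Fin n, ∃ g : (Fin n × Fin b) → ZMod 2,
            g ∈ Rsp ∧ (∀ q ∈ S, g q ≠ 0 → q.1 = j') ∧
            ((j' ≠ j ∧ Hq i j' ≠ 0) → ∀ f, (j', f) ∈ S →
              g (j', f) = ((Ψm (Hq i j'))ᵀ *ᵥ (c : Fin b → ZMod 2)) f) ∧
            (¬(j' ≠ j ∧ Hq i j' ≠ 0) → g = 0) := by
          intro j'
          by_cases hcase : j' ≠ j ∧ Hq i j' ≠ 0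
          · have hw : (Ψm (Hq i j'))ᵀ *ᵥ (c : Fin b → ZMod 2) ≠ 0 :=
              hΨinv _ hcase.2 _ c.prop
            have hcol : HE (Sum.inl (i, c)) (j', ⟨_, hw⟩) = 1 :=
              (hHPM i c j' ⟨_, hw⟩).2 ⟨hcase.2, rfl⟩
            have hnotT : ¬ ¬ InB j' ((⟨_, hw⟩ : {v : Fin b → ZMod 2 // v ≠ 0}) :
                Fin b → ZMod 2) := by
              intro hmem
              have heq := huniq (j', ⟨_, hw⟩) ⟨hmem, by rw [hcol]; exact one_ne_zero⟩
              exact hcase.1 (congrArg Prod.fst heq)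
            obtain ⟨g, hg1, hg2, hg3⟩ := not_not.mp hnotT
            exact ⟨g, hg1, hg2, fun _ f hf => hg3 f hf, fun hcon => absurd hcase hcon⟩
          · exact ⟨0, Submodule.zero_mem _, fun q _ hq => absurd rfl hq,
              fun hcon => absurd hcon hcase, fun _ => rfl⟩
        choose g hg1 hg2 hg3 hg4 using hgex
        set h : (Fin n × Fin b) → ZMod 2 := rc + ∑ j', g j' with hh
        have hhR : h ∈ Rsp :=
          Submodule.add_mem _ hrcR (Submodule.sum_mem _ fun j' _ => hg1 j')
        have heval : ∀ (j' : Fin n) (f : Fin b), (j', f) ∈ S →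
            h (j', f) = rc (j', f) + g j' (j', f) := by
          intro j' f hf
          have hsum : (∑ j'' : Fin n, g j'') (j', f) = g j' (j', f) := by
            rw [Finset.sum_apply]
            refine Finset.sum_eq_single j' (fun j'' _ hne' => ?_) (by simp)
            by_contra hne0
            exact hne' ((hg2 j'' (j', f) hf hne0).symm)
          simp [hh, Pi.add_apply, hsum]
        refine hT ⟨h, hhR, ?_, ?_⟩
        · rintro ⟨j', f⟩ hqS hne0
          by_contra hjj
          have he := heval j' f hqS
          by_cases h0 : Hq i j' = 0
          · have hrc0 : rc (j', f) = 0 := by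
              simp only [hrc, Matrix.mulVec, dotProduct, Matrix.transpose_apply, h0]
              exact Finset.sum_eq_zero fun e _ => by rw [hΨ0 e f, zero_mul]
            have hgj : g j' = 0 := hg4 j' fun hcase => hcase.2 h0
            rw [he, hrc0, hgj] at hne0
            exact hne0 (by simp)
          · have hgj := hg3 j' ⟨hjj, h0⟩ f hqS
            rw [he, hgj] at hne0
            exact hne0 (hxx _)
        · intro f hf
          have he := heval j f hf
          have hgj : g j = 0 := hg4 j fun hcase => hcase.1 rfl
          rw [he, hgj]
          show rc (j, f) + 0 = (c' : Fin b → ZMod 2) f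
          rw [add_zero]
          simp only [hrc]
          exact (congrFun hc' f).symm
      · -- simplex rows
        obtain ⟨hjj₀, hc12, hsum, hcases⟩ := (hHS j₀ c₁ c₂ j c').1 ((z2 _).1 hne)
        subst hjj₀
        have e1 : HE (Sum.inr (j, c₁, c₂)) (j, c₁) = 1 :=
          (hHS j c₁ c₂ j c₁).2 ⟨rfl, hc12, hsum, Or.inl rfl⟩
        have e2 : HE (Sum.inr (j, c₁, c₂)) (j, c₂) = 1 :=
          (hHS j c₁ c₂ j c₂).2 ⟨rfl, hc12, hsum, Or.inr (Or.inl rfl)⟩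
        have e3 : HE (Sum.inr (j, c₁, c₂)) (j, ⟨_, hsum⟩) = 1 :=
          (hHS j c₁ c₂ j ⟨_, hsum⟩).2 ⟨rfl, hc12, hsum, Or.inr (Or.inr rfl)⟩
        have hnotT : ∀ d : {v : Fin b → ZMod 2 // v ≠ 0},
            HE (Sum.inr (j, c₁, c₂)) (j, d) = 1 → d ≠ c' →
            InB j (d : Fin b → ZMod 2) := by
          intro d hd hne'
          by_contra hdT
          have heq := huniq (j, d) ⟨hdT, by rw [hd]; exact one_ne_zero⟩
          exact hne' (by
            have := congrArg Prod.snd heq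
            simpa using this)
        have hne31 : (⟨_, hsum⟩ : {v : Fin b → ZMod 2 // v ≠ 0}) ≠ c₁ := by
          intro hx
          apply c₂.prop
          have h2 : (c₁ : Fin b → ZMod 2) + (c₂ : Fin b → ZMod 2) = c₁ :=
            congrArg Subtype.val hx
          funext f
          have h2f := congrFun h2 f
          rw [Pi.add_apply] at h2f
          exact hxy0 _ _ h2f
        have hne32 : (⟨_, hsum⟩ : {v : Fin b → ZMod 2 // v ≠ 0}) ≠ c₂ := by
          intro hx
          apply c₁.prop
          have h2 : (c₁ : Fin b → ZMod 2) + (c₂ : Fin b → ZMod 2) = c₂ :=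
            congrArg Subtype.val hx
          funext f
          have h2f := congrFun h2 f
          rw [Pi.add_apply] at h2f
          exact hyx0 _ _ h2f
        have hcc' : c' = c₁ ∨ c' = c₂ ∨ c' = ⟨_, hsum⟩ := by
          rcases hcases with h | h | h
          · exact Or.inl h
          · exact Or.inr (Or.inl h)
          · exact Or.inr (Or.inr (Subtype.ext h))
        apply hT
        show InB j (c' : Fin b → ZMod 2)
        rcases hcc' with h | h | h
        · rw [h]
          have i2 := hnotT c₂ e2 (fun hx => hc12 ((hx.trans h).symm))
          have i3 := hnotT ⟨_, hsum⟩ e3 (fun hx => hne31 (hx.trans h))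
          have hv : (c₁ : Fin b → ZMod 2) =
              (c₂ : Fin b → ZMod 2) + ((c₁ : Fin b → ZMod 2) + c₂) := by
            funext f
            rw [Pi.add_apply, Pi.add_apply]
            exact hrep1 _ _
          rw [hv]
          exact InB_add j _ _ i2 i3
        · rw [h]
          have i1 := hnotT c₁ e1 (fun hx => hc12 (hx.trans h))
          have i3 := hnotT ⟨_, hsum⟩ e3 (fun hx => hne32 (hx.trans h))
          have hv : (c₂ : Fin b → ZMod 2) =
              (c₁ : Fin b → ZMod 2) + ((c₁ : Fin b → ZMod 2) + c₂) := by
            funext f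
            rw [Pi.add_apply, Pi.add_apply]
            exact hrep2 _ _
          rw [hv]
          exact InB_add j _ _ i1 i3
        · rw [h]
          have i1 := hnotT c₁ e1 (fun hx => hne31 (hx.trans h).symm)
          have i2 := hnotT c₂ e2 (fun hx => hne32 (hx.trans h).symm)
          exact InB_add j _ _ i1 i2
    · -- T ∩ It = image of S
      ext ⟨j, c⟩
      simp only [Set.mem_inter_iff, Set.mem_setOf_eq, hIt, Set.mem_image]
      constructor
      · rintro ⟨hTm, e, hce⟩
        subst hce
        have heS : (j, e) ∈ S := by
          by_contra hnot
          apply hTm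
          apply InB_zero
          intro f hf
          rw [hu e]
          rcases eq_or_ne f e with rfl | hfe
          · exact absurd hf hnot
          · exact Pi.single_eq_of_ne hfe 1
        exact ⟨(j, e), heS, rfl⟩
      · rintro ⟨⟨j', e⟩, hqS, heq⟩
        obtain ⟨h1, h2⟩ := Prod.ext_iff.mp heq
        subst h1
        subst h2
        refine ⟨?_, e, rfl⟩
        apply InB_single _ _ e hqS
        · rw [hu e, Pi.single_eq_same]; exact one_ne_zero
        · intro f hf hfe
          rw [hu e]
          exact Pi.single_eq_of_ne hfe 1
  -- conclude
  obtain ⟨h, hhR, p, hpS, hsupp⟩ := key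
  refine ⟨h, hhR, ⟨p, hpS, hsupp⟩, ?_⟩
  intro hstop
  have hp : p ∈ {q : Fin n × Fin b | h q ≠ 0} ∩ S := by rw [hsupp]; exact rfl
  refine hstop (Sum.inr ()) ⟨p, ⟨hpS, ?_⟩, ?_⟩
  · simpa using hp.1
  · rintro q ⟨hqS, hq0⟩
    have hqm : q ∈ {q : Fin n × Fin b | h q ≠ 0} ∩ S := ⟨by simpa using hq0, hqS⟩
    rw [hsupp] at hqm
    exact hqm
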